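/- The 2-domination number of the cylinder C₄ □ P_m equals ⌈(3m+3)/2⌉ for every m ≥ 3. -/

import Mathlib

open SimpleGraph

/-- `S` is a 2-dominating set of `G`: every vertex not in `S` has at least two neighbors in `S`. -/
def TwoDomSet {V : Type*} (G : SimpleGraph V) (S : Set V) : Prop :=
  ∀ v ∉ S, 2 ≤ (S ∩ G.neighborSet v).ncard

/-- The 2-domination number of `G`. -/
noncomputable def gamma2 {V : Type*} (G : SimpleGraph V) : ℕ :=
  sInf {k | ∃ S : Set V, TwoDomSet G S ∧ S.ncard = k}

/-- The cylinder `C_n □ P_m`. -/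
def cylinder (n m : ℕ) : SimpleGraph (Fin n × Fin m) :=
  (cycleGraph n) □ (pathGraph m)

namespace G2C4

abbrev Col := Fin 4 → Bool

def w (b : Col) : ℕ := (b 0).toNat + (b 1).toNat + (b 2).toNat + (b 3).toNat

def ingot (a b : Col) (v : Fin 4) : ℕ := (b (v+1)).toNat + (b (v+3)).toNat + (a v).toNat

def cnt (c : ℕ → Col) (j : ℕ) (v : Fin 4) : ℕ :=
  ingot (c (j-1)) (c j) v + (c (j+1) v).toNat

def Dom (c : ℕ → Col) (m : ℕ) : Prop :=
  ∀ j, 1 ≤ j → j ≤ m → ∀ v, c j v = false → 2 ≤ cnt c j v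

def Van (c : ℕ → Col) (m : ℕ) : Prop :=
  (∀ v, c 0 v = false) ∧ ∀ j, m < j → ∀ v, c j v = false

/-! ### The transfer-matrix lower bound machinery -/

abbrev State := Col × Col

def stepF (p : State) (b : Col) : State :=
  (b, fun v => !b v && decide (ingot p.1 b v = 1))

def Valid (p : State) (b : Col) : Prop :=
  (∀ v, p.2 v = true → b v = true) ∧ ∀ v, b v = false → 1 ≤ ingot p.1 b v

instance (p : State) (b : Col) : Decidable (Valid p b) := by
  unfold Valid; infer_instance

def init : State := (fun _ => false, fun _ => false)

def codeOf (p : State) : ℕ :=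
  ((p.1 0).toNat + 2*(p.1 1).toNat + 4*(p.1 2).toNat + 8*(p.1 3).toNat)
  + 16 * ((p.2 0).toNat + 2*(p.2 1).toNat + 4*(p.2 2).toNat + 8*(p.2 3).toNat)

def tbl : List (Nat × (Nat × Nat × Nat)) := [(0, (1000, 1000, 1000)), (3, (4, 4, 6)), (5, (2, 4, 6)), (6, (4, 4, 6)), (7, (6, 6, 6)), (9, (4, 4, 6)), (10, (2, 4, 6)), (11, (6, 6, 6)), (12, (4, 4, 6)), (13, (6, 6, 6)), (14, (6, 6, 6)), (15, (10, 10, 10)), (20, (4, 4, 4)), (22, (4, 4, 4)), (28, (4, 4, 4)), (40, (4, 4, 4)), (41, (4, 4, 4)), (44, (4, 4, 4)), (52, (2, 2, 2)), (56, (2, 2, 2)), (60, (2, 6, 6)), (65, (4, 4, 4)), (67, (4, 4, 4)), (73, (4, 4, 4)), (97, (2, 2, 2)), (104, (2, 2, 2)), (105, (2, 6, 6)), (120, (0, 0, 2)), (130, (4, 4, 4)), (131, (4, 4, 4)), (134, (4, 4, 4)), (146, (2, 2, 2)), (148, (2, 2, 2)), (150, (2, 6, 6)), (180, (0, 0, 2)),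 (193, (2, 2, 2)), (194, (2, 2, 2)), (195, (2, 6, 6)), (210, (0, 0, 2)), (225, (0, 0, 2)), (240, (4, 4, 4))]

def vals (p : State) : Nat × Nat × Nat := ((tbl.lookup (codeOf p)).getD (1000, 1000, 1000))

def A (p : State) : ℕ := (vals p).1
def B (p : State) : ℕ := (vals p).2.1
def C (p : State) : ℕ := (vals p).2.2
def Inv (p : State) : Bool := (tbl.lookup (codeOf p)).isSome

set_option maxRecDepth 1000000 in
lemma D0 : ∀ b : Col, Valid init b →
    Inv (stepF init b) = true ∧ A (stepF init b) + 6 ≤ 4 * w b := by decide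

set_option maxRecDepth 10000000 in
lemma D1 : ∀ (p : State) (b : Col), Inv p = true → Valid p b →
    Inv (stepF p b) = true ∧
    B (stepF p b) + 6 ≤ A p + 4 * w b ∧
    C (stepF p b) + 6 ≤ B p + 4 * w b ∧
    C (stepF p b) + 6 ≤ C p + 4 * w b ∧
    ((∀ v, (stepF p b).2 v = false) → 6 ≤ C (stepF p b)) := by decide

def run (c : ℕ → Col) : ℕ → State
  | 0 => init
  | j+1 => stepF (run c j) (c (j+1))

lemma toNat_le_one (b : Bool) : b.toNat ≤ 1 := by cases b <;> simp

lemma run_fst (c : ℕ → Col) (h0 : ∀ v, c 0 v = false) : ∀ j, (run c j).1 = c j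
  | 0 => by funext v; exact (h0 v).symm
  | j+1 => rfl

lemma valid_run {c : ℕ → Col} {m : ℕ} (hD : Dom c m) (hV : Van c m) {j : ℕ} (hj : j < m) :
    Valid (run c j) (c (j+1)) := by
  constructor
  · intro v hv
    match j, hj, hv with
    | 0, hj, hv => simp [run, init] at hv
    | i+1, hj, hv =>
      have hfst : (run c i).1 = c i := run_fst c hV.1 i
      simp only [run, stepF, hfst, Bool.and_eq_true, Bool.not_eq_true',
        decide_eq_true_eq] at hv
      obtain ⟨hbv, hig⟩ := hv
      have h2 := hD (i+1) (by omega) (by omega) v hbv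
      unfold cnt at h2
      simp only [Nat.add_sub_cancel] at h2
      cases hcv : c (i+1+1) v
      · rw [hcv] at h2; simp [Bool.toNat] at h2; omega
      · rfl
  · intro v hbv
    have hfst : (run c j).1 = c j := run_fst c hV.1 j
    rw [hfst]
    have h2 := hD (j+1) (by omega) (by omega) v hbv
    unfold cnt at h2
    simp only [Nat.add_sub_cancel] at h2
    have := toNat_le_one (c (j+1+1) v)
    omega

lemma need_final {c : ℕ → Col} {m : ℕ} (hm : 1 ≤ m) (hD : Dom c m) (hV : Van c m) :
    ∀ v, (run c m).2 v = false := by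
  intro v
  obtain ⟨i, rfl⟩ : ∃ i, m = i + 1 := ⟨m - 1, by omega⟩
  have hfst : (run c i).1 = c i := run_fst c hV.1 i
  show (stepF (run c i) (c (i+1))).2 v = false
  simp only [stepF, hfst]
  cases hbv : c (i+1) v
  · have h2 := hD (i+1) (by omega) (by omega) v hbv
    unfold cnt at h2
    simp only [Nat.add_sub_cancel] at h2
    have hout : c (i+1+1) v = false := hV.2 (i+1+1) (by omega) v
    rw [hout] at h2
    simp only [Bool.toNat_false, Nat.add_zero] at h2
    simp [show ¬ (ingot (c i) (c (i+1)) v = 1) by omega]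
  · simp

lemma lower_core {c : ℕ → Col} {m : ℕ} (hm : 3 ≤ m) (hD : Dom c m) (hV : Van c m) :
    6*m + 6 ≤ 4 * ∑ i ∈ Finset.range m, w (c (i+1)) := by
  have h1 : Inv (run c 1) = true ∧
      6*1 + A (run c 1) ≤ 4 * ∑ i ∈ Finset.range 1, w (c (i+1)) := by
    have hv := valid_run hD hV (show 0 < m by omega)
    have hd := D0 (c (0+1)) hv
    have e : run c 1 = stepF init (c (0+1)) := rfl
    rw [Finset.sum_range_one, e]
    exact ⟨hd.1, by omega⟩
  have h2 : Inv (run c 2) = true ∧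
      6*2 + B (run c 2) ≤ 4 * ∑ i ∈ Finset.range 2, w (c (i+1)) := by
    have hv := valid_run hD hV (show 1 < m by omega)
    have hd := D1 (run c 1) (c (1+1)) h1.1 hv
    have e : run c 2 = stepF (run c 1) (c (1+1)) := rfl
    rw [Finset.sum_range_succ, e]
    exact ⟨hd.1, by have := h1.2; omega⟩
  have h3 : Inv (run c 3) = true ∧
      6*3 + C (run c 3) ≤ 4 * ∑ i ∈ Finset.range 3, w (c (i+1)) := by
    have hv := valid_run hD hV (show 2 < m by omega)
    have hd := D1 (run c 2) (c (2+1)) h2.1 hv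
    have e : run c 3 = stepF (run c 2) (c (2+1)) := rfl
    rw [Finset.sum_range_succ, e]
    exact ⟨hd.1, by have := h2.2; omega⟩
  have key : ∀ k, 3 + k ≤ m → Inv (run c (3+k)) = true ∧
      6*(3+k) + C (run c (3+k)) ≤ 4 * ∑ i ∈ Finset.range (3+k), w (c (i+1)) := by
    intro k
    induction k with
    | zero => intro _; exact h3
    | succ n ih =>
      intro hn
      obtain ⟨hinv, hsum⟩ := ih (by omega)
      have hv := valid_run hD hV (show 3 + n < m by omega)
      have hd := D1 (run c (3+n)) (c (3+n+1)) hinv hv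
      have e : run c (3+(n+1)) = stepF (run c (3+n)) (c (3+n+1)) := rfl
      have es : (3:ℕ) + (n+1) = (3+n) + 1 := by omega
      rw [es, Finset.sum_range_succ]
      rw [show run c (3+n+1) = stepF (run c (3+n)) (c (3+n+1)) from rfl]
      exact ⟨hd.1, by have := hd.2.2.2.1; omega⟩
  obtain ⟨k, rfl⟩ : ∃ k, m = 3 + k := ⟨m - 3, by omega⟩
  obtain ⟨hinvm, hsumm⟩ := key k le_rfl
  -- acceptance: 6 ≤ C (run c (3+k))
  have hinvpred : Inv (run c (2+k)) = true := by
    cases k with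
    | zero => exact h2.1
    | succ n =>
      have e : 2+(n+1) = 3+n := by omega
      rw [e]
      exact (key n (by omega)).1
  have hv := valid_run hD hV (show 2+k < 3+k by omega)
  have hd := D1 (run c (2+k)) (c (2+k+1)) hinvpred hv
  have e3 : run c (3+k) = stepF (run c (2+k)) (c (2+k+1)) := by
    rw [show 3+k = (2+k)+1 by omega]; rfl
  have hnf := need_final (show 1 ≤ 3+k by omega) hD hV
  have hacc : 6 ≤ C (run c (3+k)) := by
    rw [e3]
    exact hd.2.2.2.2 (fun v => by rw [← e3]; exact hnf v)
  omega

/-! ### Graph glue -/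

lemma fin4_cases : ∀ (a : Fin 4),
    (a + 1 ≠ a + 3) ∧ (a + 1 ≠ a) ∧ (a + 3 ≠ a) ∧ (a = (a + 3) + 1) ∧ (∀ u : Fin 4, u = (u+1)+3) := by
  decide

lemma cyl_adj {m : ℕ} {x y : Fin 4 × Fin m} :
    (cylinder 4 m).Adj x y ↔
      (x.2 = y.2 ∧ (x.1 = y.1 + 1 ∨ y.1 = x.1 + 1)) ∨
      (x.1 = y.1 ∧ (x.2.val + 1 = y.2.val ∨ y.2.val + 1 = x.2.val)) := by
  have e : ∀ u v : Fin 4, u - v = 1 ↔ u = v + 1 := fun u v => by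
    rw [sub_eq_iff_eq_add, add_comm]
  show ((cycleGraph 4) □ (pathGraph m)).Adj x y ↔ _
  rw [boxProd_adj, pathGraph_adj,
    show (cycleGraph 4).Adj x.1 y.1 ↔ (x.1 - y.1 = 1 ∨ y.1 - x.1 = 1) from cycleGraph_adj]
  rw [e, e]
  tauto

def Sset (c : ℕ → Col) (m : ℕ) : Set (Fin 4 × Fin m) := {p | c (p.2.val + 1) p.1 = true}

lemma two_le_ncard {α : Type*} [Finite α] {s : Set α} {x y : α}
    (hx : x ∈ s) (hy : y ∈ s) (hxy : x ≠ y) : 2 ≤ s.ncard :=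
  (Set.one_lt_ncard (Set.toFinite s)).2 ⟨x, hx, y, hy, hxy⟩

lemma mem_forms {c : ℕ → Col} {m : ℕ} {a : Fin 4} {i : Fin m} {z : Fin 4 × Fin m}
    (hz : z ∈ Sset c m ∩ (cylinder 4 m).neighborSet (a, i)) :
    (z = (a+1, i) ∧ c (i.val+1) (a+1) = true) ∨
    (z = (a+3, i) ∧ c (i.val+1) (a+3) = true) ∨
    (z.1 = a ∧ z.2.val + 1 = i.val ∧ c i.val a = true) ∨
    (z.1 = a ∧ z.2.val = i.val + 1 ∧ c (i.val+2) a = true) := by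
  obtain ⟨hzS, hadj⟩ := hz
  have hz' : c (z.2.val + 1) z.1 = true := hzS
  rw [SimpleGraph.mem_neighborSet, cyl_adj] at hadj
  dsimp only at hadj
  rcases hadj with ⟨h2, h1 | h1⟩ | ⟨h1, h2 | h2⟩
  · right; left
    have hz1 : z.1 = a + 3 := by rw [h1]; exact (fin4_cases a).2.2.2.2 z.1
    have hz2 : z.2 = i := h2.symm
    refine ⟨Prod.ext hz1 hz2, ?_⟩
    rw [← hz1, ← show z.2.val = i.val from congrArg Fin.val hz2]
    exact hz'
  · left
    have hz2 : z.2 = i := h2.symm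
    refine ⟨Prod.ext h1 hz2, ?_⟩
    rw [← h1, ← show z.2.val = i.val from congrArg Fin.val hz2]
    exact hz'
  · right; right; right
    refine ⟨h1.symm, h2.symm, ?_⟩
    rw [show i.val + 2 = z.2.val + 1 by omega, h1]
    exact hz'
  · right; right; left
    refine ⟨h1.symm, h2, ?_⟩
    rw [show i.val = z.2.val + 1 by omega, h1]
    exact hz'

lemma cand12 {c : ℕ → Col} {m : ℕ} {a : Fin 4} {i : Fin m} {b : Fin 4}
    (hb : b = a + 1 ∨ a = b + 1) (h : c (i.val+1) b = true) :
    (b, i) ∈ Sset c m ∩ (cylinder 4 m).neighborSet (a, i) := by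
  refine ⟨h, ?_⟩
  rw [SimpleGraph.mem_neighborSet, cyl_adj]
  exact Or.inl ⟨rfl, by tauto⟩

lemma cand3 {c : ℕ → Col} {m : ℕ} {a : Fin 4} {i : Fin m}
    (hV : Van c m) (h : c i.val a = true) :
    ∃ i' : Fin m, i'.val + 1 = i.val ∧
      (a, i') ∈ Sset c m ∩ (cylinder 4 m).neighborSet (a, i) := by
  have hi : 1 ≤ i.val := by
    by_contra hc
    have h0 : i.val = 0 := by omega
    rw [h0, hV.1 a] at h
    exact Bool.false_ne_true h
  refine ⟨⟨i.val - 1, by omega⟩, by simp; omega, ?_, ?_⟩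
  · show c (i.val - 1 + 1) a = true
    rw [show i.val - 1 + 1 = i.val by omega]
    exact h
  · rw [SimpleGraph.mem_neighborSet, cyl_adj]
    exact Or.inr ⟨rfl, Or.inr (by simp; omega)⟩

lemma cand4 {c : ℕ → Col} {m : ℕ} {a : Fin 4} {i : Fin m}
    (hV : Van c m) (h : c (i.val+1+1) a = true) :
    ∃ i' : Fin m, i'.val = i.val + 1 ∧
      (a, i') ∈ Sset c m ∩ (cylinder 4 m).neighborSet (a, i) := by
  have hi : i.val + 2 ≤ m := by
    by_contra hc
    rw [hV.2 (i.val+1+1) (by omega) a] at h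
    exact Bool.false_ne_true h
  refine ⟨⟨i.val + 1, by omega⟩, rfl, ?_, ?_⟩
  · show c (i.val + 1 + 1) a = true
    exact h
  · rw [SimpleGraph.mem_neighborSet, cyl_adj]
    exact Or.inr ⟨rfl, Or.inl rfl⟩

lemma twoDom_iff {c : ℕ → Col} {m : ℕ} (hV : Van c m) :
    TwoDomSet (cylinder 4 m) (Sset c m) ↔ Dom c m := by
  constructor
  · intro hT j hj1 hjm v hv
    have him : j - 1 < m := by omega
    set i : Fin m := ⟨j - 1, him⟩ with hidef
    have e0 : i.val = j - 1 := rfl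
    have e1 : i.val + 1 = j := by rw [e0]; omega
    have e2 : i.val + 2 = j + 1 := by rw [e0]; omega
    have hnot : (v, i) ∉ Sset c m := by
      show ¬ (c (i.val + 1) v = true)
      rw [e1, hv]; exact Bool.false_ne_true
    have h2 := hT (v, i) hnot
    obtain ⟨x, hx, y, hy, hxy⟩ := (Set.one_lt_ncard (Set.toFinite _)).1 h2
    have Fx := mem_forms hx
    have Fy := mem_forms hy
    rw [e1, e2, e0] at Fx Fy
    show 2 ≤ (c j (v+1)).toNat + (c j (v+3)).toNat + (c (j-1) v).toNat + (c (j+1) v).toNat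
    rcases Fx with ⟨hx1, hx2⟩ | ⟨hx1, hx2⟩ | ⟨hx1, hx2, hx3⟩ | ⟨hx1, hx2, hx3⟩ <;>
        rcases Fy with ⟨hy1, hy2⟩ | ⟨hy1, hy2⟩ | ⟨hy1, hy2, hy3⟩ | ⟨hy1, hy2, hy3⟩
    · exact absurd (hx1.trans hy1.symm) hxy
    · simp only [hx2, hy2, Bool.toNat_true]; omega
    · simp only [hx2, hy3, Bool.toNat_true]; omega
    · simp only [hx2, hy3, Bool.toNat_true]; omega
    · simp only [hx2, hy2, Bool.toNat_true]; omega
    · exact absurd (hx1.trans hy1.symm) hxy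
    · simp only [hx2, hy3, Bool.toNat_true]; omega
    · simp only [hx2, hy3, Bool.toNat_true]; omega
    · simp only [hx3, hy2, Bool.toNat_true]; omega
    · simp only [hx3, hy2, Bool.toNat_true]; omega
    · exact absurd (Prod.ext (hx1.trans hy1.symm) (Fin.ext (by omega))) hxy
    · simp only [hx3, hy3, Bool.toNat_true]; omega
    · simp only [hx3, hy2, Bool.toNat_true]; omega
    · simp only [hx3, hy2, Bool.toNat_true]; omega
    · simp only [hx3, hy3, Bool.toNat_true]; omega
    · exact absurd (Prod.ext (hx1.trans hy1.symm) (Fin.ext (by omega))) hxy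
  · intro hD z hz
    obtain ⟨a, i⟩ := z
    have hzf : c (i.val+1) a = false := by
      have h' : ¬ (c (i.val+1) a = true) := hz
      simp at h'; exact h'
    have h2 := hD (i.val+1) (by omega) (by omega) a hzf
    unfold cnt at h2
    simp only [Nat.add_sub_cancel] at h2
    unfold ingot at h2
    have hne34 : ∀ (i3 i4 : Fin m), i3.val + 1 = i.val → i4.val = i.val + 1 →
        ((a, i3) : Fin 4 × Fin m) ≠ (a, i4) := by
      intro i3 i4 h3 h4 h
      have h' : (i3 : Fin m).val = i4.val :=
        congrArg (fun p : Fin 4 × Fin m => p.2.val) h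
      omega
    cases hb1 : c (i.val+1) (a+1) <;> cases hb2 : c (i.val+1) (a+3) <;>
        cases hb3 : c i.val a <;> cases hb4 : c (i.val+1+1) a <;>
        rw [hb1, hb2, hb3, hb4] at h2 <;> simp at h2
    · -- b3, b4
      obtain ⟨i3, hi3, hm3⟩ := cand3 hV hb3
      obtain ⟨i4, hi4, hm4⟩ := cand4 hV hb4
      exact two_le_ncard hm3 hm4 (hne34 i3 i4 hi3 hi4)
    · -- b2, b4
      obtain ⟨i4, hi4, hm4⟩ := cand4 hV hb4
      exact two_le_ncard (cand12 (Or.inr (fin4_cases a).2.2.2.1) hb2) hm4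
        (fun h => (fin4_cases a).2.2.1 (congrArg Prod.fst h))
    · -- b2, b3
      obtain ⟨i3, hi3, hm3⟩ := cand3 hV hb3
      exact two_le_ncard (cand12 (Or.inr (fin4_cases a).2.2.2.1) hb2) hm3
        (fun h => (fin4_cases a).2.2.1 (congrArg Prod.fst h))
    · -- b2, b3, b4
      obtain ⟨i3, hi3, hm3⟩ := cand3 hV hb3
      exact two_le_ncard (cand12 (Or.inr (fin4_cases a).2.2.2.1) hb2) hm3
        (fun h => (fin4_cases a).2.2.1 (congrArg Prod.fst h))
    · -- b1, b4
      obtain ⟨i4, hi4, hm4⟩ := cand4 hV hb4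
      exact two_le_ncard (cand12 (Or.inl rfl) hb1) hm4
        (fun h => (fin4_cases a).2.1 (congrArg Prod.fst h))
    · -- b1, b3
      obtain ⟨i3, hi3, hm3⟩ := cand3 hV hb3
      exact two_le_ncard (cand12 (Or.inl rfl) hb1) hm3
        (fun h => (fin4_cases a).2.1 (congrArg Prod.fst h))
    · -- b1, b3, b4
      obtain ⟨i3, hi3, hm3⟩ := cand3 hV hb3
      exact two_le_ncard (cand12 (Or.inl rfl) hb1) hm3
        (fun h => (fin4_cases a).2.1 (congrArg Prod.fst h))
    · -- b1, b2
      exact two_le_ncard (cand12 (Or.inl rfl) hb1)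
        (cand12 (Or.inr (fin4_cases a).2.2.2.1) hb2)
        (fun h => (fin4_cases a).1 (congrArg Prod.fst h))
    · exact two_le_ncard (cand12 (Or.inl rfl) hb1)
        (cand12 (Or.inr (fin4_cases a).2.2.2.1) hb2)
        (fun h => (fin4_cases a).1 (congrArg Prod.fst h))
    · exact two_le_ncard (cand12 (Or.inl rfl) hb1)
        (cand12 (Or.inr (fin4_cases a).2.2.2.1) hb2)
        (fun h => (fin4_cases a).1 (congrArg Prod.fst h))
    · exact two_le_ncard (cand12 (Or.inl rfl) hb1)
        (cand12 (Or.inr (fin4_cases a).2.2.2.1) hb2)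
        (fun h => (fin4_cases a).1 (congrArg Prod.fst h))

lemma ncard_Sset (c : ℕ → Col) (m : ℕ) :
    (Sset c m).ncard = ∑ i ∈ Finset.range m, w (c (i+1)) := by
  have hF : Sset c m = ↑(Finset.univ.filter (fun p : Fin 4 × Fin m => c (p.2.val+1) p.1 = true)) := by
    ext p
    simp [Sset]
  rw [hF, Set.ncard_coe_finset, Finset.card_filter]
  rw [Fintype.sum_prod_type_right]
  have hw : ∀ i : Fin m, (∑ a : Fin 4, if c (i.val+1) a = true then 1 else 0) = w (c (i.val+1)) := by
    intro i
    rw [Fin.sum_univ_four]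
    have : ∀ x : Bool, (if x = true then 1 else 0) = x.toNat := by
      intro x; cases x <;> rfl
    rw [this, this, this, this]; rfl
  rw [Finset.sum_congr rfl (fun i _ => hw i)]
  exact Fin.sum_univ_eq_sum_range (fun j => w (c (j+1))) m

/-! ### The construction -/

open scoped Fin.NatCast Fin.CommRing

def tau (k : ℕ) : Fin 4 := 1 - (k : Fin 4)

def single (s : Fin 4) : Col := fun v => v == s
def pairAdj (s : Fin 4) : Col := fun v => v == s || v == s + 1
def pairOpp (s : Fin 4) : Col := fun v => v == s || v == s + 2

def OK (l c r : Col) : Prop := ∀ v, c v = false → 2 ≤ ingot l c v + (r v).toNat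

def colD (m : ℕ) (j : ℕ) : Col :=
  if j = 0 ∨ m < j then (fun _ => false)
  else if j = 1 then pairAdj 0
  else if j = 2 then pairAdj 2
  else if j = m then
    (if m % 2 = 1 then pairOpp (tau ((m-1)/2)) else pairOpp (tau ((m-2)/2) + 1))
  else if m % 2 = 0 ∧ j = m - 1 then pairOpp (tau ((m-2)/2))
  else if j % 2 = 1 then single (tau ((j-1)/2))
  else pairAdj (tau ((j-2)/2) + 1)

lemma tau_succ (k : ℕ) : tau (k+1) = tau k + 3 := by
  unfold tau
  push_cast
  have h4 : (4:Fin 4) = 0 := by decide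
  linear_combination (-1 : Fin 4) * h4

lemma tau_pred {k : ℕ} (hk : 1 ≤ k) : tau (k-1) = tau k + 1 := by
  unfold tau
  rw [Nat.cast_sub hk]
  push_cast
  ring

instance (l c r : Col) : Decidable (OK l c r) := by
  unfold OK; infer_instance

lemma colD_zero (m : ℕ) : colD m 0 = fun _ => false := by
  unfold colD; rw [if_pos (Or.inl rfl)]

lemma colD_big {m j : ℕ} (h : m < j) : colD m j = fun _ => false := by
  unfold colD; rw [if_pos (Or.inr h)]

lemma colD_one {m : ℕ} (h : 1 ≤ m) : colD m 1 = pairAdj 0 := by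
  unfold colD; rw [if_neg (by omega), if_pos rfl]

lemma colD_two {m : ℕ} (h : 2 ≤ m) : colD m 2 = pairAdj 2 := by
  unfold colD; rw [if_neg (by omega), if_neg (by omega), if_pos rfl]

lemma colD_last_odd {m : ℕ} (h3 : 3 ≤ m) (ho : m % 2 = 1) :
    colD m m = pairOpp (tau ((m-1)/2)) := by
  unfold colD
  rw [if_neg (by omega), if_neg (by omega), if_neg (by omega), if_pos rfl, if_pos ho]

lemma colD_last_even {m : ℕ} (h3 : 3 ≤ m) (he : m % 2 = 0) :
    colD m m = pairOpp (tau ((m-2)/2) + 1) := by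
  unfold colD
  rw [if_neg (by omega), if_neg (by omega), if_neg (by omega), if_pos rfl, if_neg (by omega)]

lemma colD_pre_even {m : ℕ} (h4 : 4 ≤ m) (he : m % 2 = 0) :
    colD m (m-1) = pairOpp (tau ((m-2)/2)) := by
  unfold colD
  rw [if_neg (by omega), if_neg (by omega), if_neg (by omega), if_neg (by omega),
    if_pos ⟨he, rfl⟩]

lemma colD_odd {m j : ℕ} (h3 : 3 ≤ j) (hle : j ≤ m - 2) (hm : 3 ≤ m) (ho : j % 2 = 1) :
    colD m j = single (tau ((j-1)/2)) := by
  unfold colD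
  rw [if_neg (by omega), if_neg (by omega), if_neg (by omega), if_neg (by omega),
    if_neg (by omega), if_pos ho]

lemma colD_even {m j : ℕ} (h4 : 4 ≤ j) (he : j % 2 = 0)
    (hle : j ≤ m - 2 ∨ (m % 2 = 1 ∧ j = m - 1)) (hm : 3 ≤ m) :
    colD m j = pairAdj (tau ((j-2)/2) + 1) := by
  unfold colD
  rw [if_neg (by omega), if_neg (by omega), if_neg (by omega), if_neg (by omega),
    if_neg (by omega), if_neg (by omega)]

lemma OK_mono {l c r l' r' : Col} (h : OK l c r)
    (hl : ∀ v, l v = true → l' v = true) (hr : ∀ v, r v = true → r' v = true) :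
    OK l' c r' := by
  intro v hv
  have h1 : (l v).toNat ≤ (l' v).toNat := by
    cases hlv : l v
    · simp
    · rw [hl v hlv]
  have h2 : (r v).toNat ≤ (r' v).toNat := by
    cases hrv : r v
    · simp
    · rw [hr v hrv]
  have := h v hv
  unfold ingot at this ⊢
  omega

lemma bot_mono : ∀ (r : Col) (v : Fin 4), (fun _ => false : Col) v = true → r v = true :=
  fun _ _ h => absurd h (by simp)

lemma Wopp : ∀ s : Fin 4, OK (fun _ => false) (pairOpp s) (fun _ => false) := by decide
lemma W1 : OK (fun _ => false) (pairAdj 0) (pairAdj 2) := by decide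
lemma W2 : OK (pairAdj 0) (pairAdj 2) (fun _ => false) := by decide
lemma Wsing : ∀ s : Fin 4, OK (pairAdj (s+2)) (single s) (pairAdj (s+1)) := by decide
lemma WpairS : ∀ t : Fin 4, OK (single t) (pairAdj (t+1)) (single (t+3)) := by decide
lemma WpairO : ∀ t : Fin 4, OK (single t) (pairAdj (t+1)) (pairOpp (t+3)) := by decide

lemma van_colD (m : ℕ) : Van (colD m) m :=
  ⟨fun v => by rw [colD_zero], fun j hj v => by rw [colD_big hj]⟩

lemma dom_colD {m : ℕ} (hm : 3 ≤ m) : Dom (colD m) m := by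
  intro j hj1 hjm v hv
  suffices h : OK (colD m (j-1)) (colD m j) (colD m (j+1)) from h v hv
  rcases show j = 1 ∨ j = 2 ∨ j = m ∨ (m % 2 = 0 ∧ j = m - 1) ∨
      (3 ≤ j ∧ j ≤ m - 2 ∧ j % 2 = 1) ∨
      (4 ≤ j ∧ j % 2 = 0 ∧ (j ≤ m - 2 ∨ (m % 2 = 1 ∧ j = m - 1))) by omega with
    h | h | h | ⟨he, h⟩ | ⟨h3, hle, ho⟩ | ⟨h4, he, hle⟩
  · rw [h, show (1:ℕ) - 1 = 0 from rfl, colD_zero, colD_one (by omega), colD_two (by omega)]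
    exact W1
  · rw [h, show (2:ℕ) - 1 = 1 from rfl, colD_one (by omega), colD_two (by omega)]
    exact OK_mono W2 (fun v h => h) (bot_mono _)
  · rcases Nat.mod_two_eq_zero_or_one m with hp | hp
    · rw [h, colD_last_even hm hp]
      exact OK_mono (Wopp _) (bot_mono _) (bot_mono _)
    · rw [h, colD_last_odd hm hp]
      exact OK_mono (Wopp _) (bot_mono _) (bot_mono _)
  · rw [h, colD_pre_even (by omega) he]
    exact OK_mono (Wopp _) (bot_mono _) (bot_mono _)
  · -- singleton interior column
    rw [colD_odd h3 hle hm ho]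
    have hl : colD m (j-1) = pairAdj (tau ((j-1)/2) + 2) := by
      rcases show j - 1 = 2 ∨ 4 ≤ j - 1 by omega with h2 | h4
      · rw [h2, colD_two (by omega)]
        decide
      · rw [colD_even h4 (by omega) (Or.inl (by omega)) hm,
          show (j-1-2)/2 = (j-1)/2 - 1 by omega, tau_pred (by omega), add_assoc]
        rw [show (1:Fin 4) + 1 = 2 by decide]
    have hr : colD m (j+1) = pairAdj (tau ((j-1)/2) + 1) := by
      rw [colD_even (by omega) (by omega) (by omega) hm,
        show (j+1-2)/2 = (j-1)/2 by omega]
    rw [hl, hr]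
    exact Wsing (tau ((j-1)/2))
  · -- pair interior column
    rw [colD_even h4 he hle hm]
    have hl : colD m (j-1) = single (tau ((j-2)/2)) := by
      rw [colD_odd (by omega) (by omega) hm (by omega),
        show (j-1-1)/2 = (j-2)/2 by omega]
    rcases show (j+1 ≤ m - 2 ∧ (j+1) % 2 = 1) ∨ (m % 2 = 0 ∧ j + 1 = m - 1) ∨
        (j + 1 = m ∧ m % 2 = 1) by omega with hc | hc | hc
    · rw [hl, colD_odd (by omega) hc.1 hm hc.2,
        show (j+1-1)/2 = (j-2)/2 + 1 by omega, tau_succ]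
      exact WpairS _
    · rw [hl, hc.2, colD_pre_even (by omega) hc.1,
        show (m-2)/2 = (j-2)/2 + 1 by omega, tau_succ]
      exact WpairO _
    · rw [hl, hc.1, colD_last_odd hm hc.2,
        show (m-1)/2 = (j-2)/2 + 1 by omega, tau_succ]
      exact WpairO _

lemma w_single : ∀ s : Fin 4, w (single s) = 1 := by decide
lemma w_pairAdj : ∀ s : Fin 4, w (pairAdj s) = 2 := by decide
lemma w_pairOpp : ∀ s : Fin 4, w (pairOpp s) = 2 := by decide

lemma Fsum : ∀ n : ℕ, ∑ i ∈ Finset.range n,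
    (if i = 0 then 2 else if (i+1) % 2 = 1 then 1 else 2) =
    (if n = 0 then 0 else (3*n+2)/2) := by
  intro n
  induction n with
  | zero => simp
  | succ k ih =>
    rw [Finset.sum_range_succ, ih]
    by_cases hk : k = 0
    · subst hk; decide
    · simp only [if_neg hk, if_neg (show ¬(k+1=0) by omega)]
      by_cases hp : (k+1) % 2 = 1
      · simp only [if_pos hp]; omega
      · simp only [if_neg hp]; omega

lemma sum_w_colD {m : ℕ} (hm : 3 ≤ m) :
    ∑ i ∈ Finset.range m, w (colD m (i+1)) = (3*m+4)/2 := by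
  obtain ⟨n, rfl⟩ : ∃ n, m = n + 2 := ⟨m - 2, by omega⟩
  have hn : 1 ≤ n := by omega
  rw [Finset.sum_range_succ, Finset.sum_range_succ]
  have h1 : w (colD (n+2) (n+1+1)) = 2 := by
    rcases Nat.mod_two_eq_zero_or_one (n+2) with hp | hp
    · rw [show n+1+1 = n+2 from rfl, colD_last_even (by omega) hp, w_pairOpp]
    · rw [show n+1+1 = n+2 from rfl, colD_last_odd (by omega) hp, w_pairOpp]
  have h2 : w (colD (n+2) (n+1)) = 2 := by
    rcases show n = 1 ∨ (2 ≤ n ∧ n % 2 = 0) ∨ (3 ≤ n ∧ n % 2 = 1) by omega with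
      hc | ⟨hc, hp⟩ | ⟨hc, hp⟩
    · rw [hc, colD_two (by omega), w_pairAdj]
    · rw [show n+1 = n+2-1 by omega, colD_pre_even (by omega) (by omega), w_pairOpp]
    · rw [colD_even (by omega) (by omega) (Or.inr ⟨by omega, by omega⟩) (by omega), w_pairAdj]
  have h3 : ∑ i ∈ Finset.range n, w (colD (n+2) (i+1)) =
      ∑ i ∈ Finset.range n, (if i = 0 then 2 else if (i+1) % 2 = 1 then 1 else 2) := by
    apply Finset.sum_congr rfl
    intro i hi
    have hi' : i < n := Finset.mem_range.1 hi
    split_ifs with hif hif2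
    · rw [hif, colD_one (by omega), w_pairAdj]
    · rw [colD_odd (by omega) (by omega) (by omega) hif2, w_single]
    · rcases show i = 1 ∨ 3 ≤ i by omega with hc | hc
      · rw [hc, colD_two (by omega), w_pairAdj]
      · rw [colD_even (by omega) (by omega) (Or.inl (by omega)) (by omega), w_pairAdj]
  rw [h3, Fsum n, h1, h2]
  split_ifs <;> omega

end G2C4

theorem gamma2_C4 (m : ℕ) (hm : 3 ≤ m) :
    (gamma2 (cylinder 4 m) : ℤ) = ⌈(3 * (m : ℚ) + 3) / 2⌉ := by
  classical
  have hdom : TwoDomSet (cylinder 4 m) (G2C4.Sset (G2C4.colD m) m) :=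
    (G2C4.twoDom_iff (G2C4.van_colD m)).2 (G2C4.dom_colD hm)
  have hcard : (G2C4.Sset (G2C4.colD m) m).ncard = (3*m+4)/2 := by
    rw [G2C4.ncard_Sset, G2C4.sum_w_colD hm]
  have hmem : (3*m+4)/2 ∈
      {k | ∃ S : Set (Fin 4 × Fin m), TwoDomSet (cylinder 4 m) S ∧ S.ncard = k} :=
    ⟨_, hdom, hcard⟩
  have hle : gamma2 (cylinder 4 m) ≤ (3*m+4)/2 := Nat.sInf_le hmem
  have hge : (3*m+4)/2 ≤ gamma2 (cylinder 4 m) := by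
    apply le_csInf ⟨_, hmem⟩
    rintro k ⟨S, hS, rfl⟩
    set c : ℕ → G2C4.Col := fun j a =>
      if h : 1 ≤ j ∧ j ≤ m then decide ((a, (⟨j-1, by omega⟩ : Fin m)) ∈ S) else false with hc
    have hV : G2C4.Van c m := by
      constructor
      · intro v
        rw [hc]
        simp
      · intro j hj v
        rw [hc]
        simp
        omega
    have hSeq : G2C4.Sset c m = S := by
      ext ⟨a, i⟩
      show (c (i.val+1) a = true) ↔ _
      rw [hc]
      dsimp only
      have hcond : 1 ≤ i.val + 1 ∧ i.val + 1 ≤ m := ⟨by omega, by omega⟩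
      rw [dif_pos hcond]
      simp only [decide_eq_true_eq]
      have e : (⟨i.val+1-1, by omega⟩ : Fin m) = i := Fin.ext (show i.val + 1 - 1 = i.val by omega)
      rw [e]
    have hD : G2C4.Dom c m := (G2C4.twoDom_iff hV).1 (by rw [hSeq]; exact hS)
    have hcore := G2C4.lower_core hm hD hV
    have hcard' : S.ncard = ∑ i ∈ Finset.range m, G2C4.w (c (i+1)) := by
      rw [← hSeq, G2C4.ncard_Sset]
    omega
  have hval : gamma2 (cylinder 4 m) = (3*m+4)/2 := le_antisymm hle hge
  rw [hval]
  rcases Nat.even_or_odd m with ⟨l, hl⟩ | ⟨l, hl⟩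
  · subst hl
    rw [show (3*(l+l)+4)/2 = 3*l+2 by omega]
    symm
    rw [Int.ceil_eq_iff]
    constructor
    · push_cast
      linarith
    · push_cast
      linarith
  · subst hl
    rw [show (3*(2*l+1)+4)/2 = 3*l+3 by omega]
    symm
    rw [Int.ceil_eq_iff]
    constructor
    · push_cast
      linarith
    · push_cast
      linarith
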